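/- Let A, B, C be locally small categories (hom-sets in Type u), let g : A ⥤ B, h : B ⥤ C, f : A ⥤ C be functors, and let φ : f ⟶ g ⋙ h be a natural transformation. Define B(g,1) : B ⥤ (Aᵒᵖ ⥤ Type u) by b ↦ (a ↦ Hom_B(g.obj a, b)), define C(f,1) : C ⥤ (Aᵒᵖ ⥤ Type u) by c ↦ (a ↦ Hom_C(f.obj a, c)), and define φ' : B(g,1) ⟶ h ⋙ C(f,1) by ((φ'.app b).app a)(β) = φ.app a ≫ h.map β for β : g.obj a ⟶ b. Then φ exhibits h as a pointwise left Kan extension of f along g if and only if φ' exhibits h as an absolute left lifting of B(g,1) along C(f,1). -/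

import Mathlib

open CategoryTheory Opposite

universe u v₁ v₂ v₃ u₁ u₂ u₃ ux vx

section HomFunctor

variable {A : Type u₁} {B : Type u₂} {C : Type u₃}
variable [Category.{u} A] [Category.{u} B] [Category.{u} C]

/-- The functor `B(g,1) : B ⥤ (Aᵒᵖ ⥤ Type u)`, `b ↦ (a ↦ Hom_B(g.obj a, b))`. -/
def homFunctor (g : A ⥤ B) : B ⥤ (Aᵒᵖ ⥤ Type u) where
  obj b :=
    { obj := fun a => (g.obj a.unop ⟶ b)
      map := fun m => TypeCat.ofHom fun β => g.map m.unop ≫ β }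
  map k := { app := fun a => TypeCat.ofHom fun β => β ≫ k }

/-- The 2-cell `φ' : B(g,1) ⟶ h ⋙ C(f,1)` associated to `φ : f ⟶ g ⋙ h`, with
components `β ↦ φ.app a ≫ h.map β`. -/
def primeTrans (g : A ⥤ B) (h : B ⥤ C) (f : A ⥤ C) (φ : f ⟶ g ⋙ h) :
    homFunctor g ⟶ h ⋙ homFunctor f where
  app b :=
    { app := fun a => TypeCat.ofHom fun β => φ.app a.unop ≫ h.map β
      naturality := by
        intro a a' m
        ext β
        have hn := φ.naturality m.unop
        revert β
        change ∀ β : g.obj a.unop ⟶ b, φ.app a'.unop ≫ h.map (g.map m.unop ≫ β) =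
          f.map m.unop ≫ φ.app a.unop ≫ h.map β
        intro β
        dsimp at hn
        rw [Functor.map_comp, ← Category.assoc, ← hn, Category.assoc] }
  naturality := by
    intro b b' k
    ext a β
    revert β
    change ∀ β : g.obj a.unop ⟶ b, φ.app a.unop ≫ h.map (β ≫ k) =
      (φ.app a.unop ≫ h.map β) ≫ h.map k
    intro β
    rw [Functor.map_comp, Category.assoc]

end HomFunctor


section Aux
open CategoryTheory.Limits

variable {A : Type u₁} {B : Type u₂} {C : Type u₃}
variable [Category.{u} A] [Category.{u} B] [Category.{u} C]
variable (g : A ⥤ B) (h : B ⥤ C) (f : A ⥤ C) (φ : f ⟶ g ⋙ h)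

/-- The pointwise map. -/
def kanMap (b : B) (c : C) (β : h.obj b ⟶ c) :
    (homFunctor g).obj b ⟶ (homFunctor f).obj c :=
  (primeTrans g h f φ).app b ≫ (homFunctor f).map β

lemma kanMap_app (b : B) (c : C) (β : h.obj b ⟶ c) (a : Aᵒᵖ) (βa : g.obj a.unop ⟶ b) :
    (kanMap g h f φ b c β).app a βa = φ.app a.unop ≫ h.map βa ≫ β := by
  simp [kanMap, primeTrans, homFunctor]
  exact (Category.assoc _ _ _)

/-- Cocone from a natural transformation. -/
def coconeOfNat (b : B) (c : C) (θ : (homFunctor g).obj b ⟶ (homFunctor f).obj c) :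
    Cocone (CostructuredArrow.proj g b ⋙ f) where
  pt := c
  ι :=
    { app := fun x => θ.app (op x.left) x.hom
      naturality := by
        intro x y m
        have := ConcreteCategory.congr_hom (θ.naturality m.left.op) y.hom
        change θ.app (op x.left) (g.map m.left ≫ y.hom) = f.map m.left ≫ θ.app (op y.left) y.hom at this
        change f.map m.left ≫ θ.app (op y.left) y.hom = θ.app (op x.left) x.hom ≫ 𝟙 c
        exact this.symm.trans ((congrArg (fun z => θ.app (op x.left) z) (CostructuredArrow.w m)).trans (Category.comp_id _).symm) }

lemma bij_of_isColimit (b : B)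
    (hb : IsColimit ((Functor.LeftExtension.mk h φ).coconeAt b)) (c : C) :
    Function.Bijective (kanMap g h f φ b c) := by
  constructor
  · intro β₁ β₂ e
    refine hb.hom_ext fun x => ?_
    have := congrFun (congrArg (fun θ => θ.app (op x.left)) e) x.hom
    simp only [kanMap_app] at this
    exact (Category.assoc _ _ _).trans (this.trans (Category.assoc _ _ _).symm)
  · intro θ
    refine ⟨hb.desc (coconeOfNat g f b c θ), ?_⟩
    ext a βa
    revert βa
    change ∀ βa : g.obj a.unop ⟶ b, (kanMap g h f φ b c (hb.desc (coconeOfNat g f b c θ))).app a βa = θ.app a βa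
    intro βa
    have := hb.fac (coconeOfNat g f b c θ) (CostructuredArrow.mk βa)
    refine (kanMap_app g h f φ b c _ a βa).trans ?_
    exact (Category.assoc _ _ _).symm.trans this

/-- Natural transformation from a cocone. -/
def natOfCocone (b : B) (s : Cocone (CostructuredArrow.proj g b ⋙ f)) :
    (homFunctor g).obj b ⟶ (homFunctor f).obj s.pt where
  app a := TypeCat.ofHom fun βa => s.ι.app (CostructuredArrow.mk βa)
  naturality := by
    intro a a' m
    ext βa
    revert βa
    change ∀ βa : g.obj a.unop ⟶ b, s.ι.app (CostructuredArrow.mk (g.map m.unop ≫ βa)) = f.map m.unop ≫ s.ι.app (CostructuredArrow.mk βa)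
    intro βa
    have := s.ι.naturality
      (CostructuredArrow.homMk m.unop (by simp) :
        (CostructuredArrow.mk (g.map m.unop ≫ βa)) ⟶ CostructuredArrow.mk βa)
    exact (Category.comp_id _).symm.trans this.symm

noncomputable def isColimit_of_bij (b : B)
    (H : ∀ c : C, Function.Bijective (kanMap g h f φ b c)) :
    IsColimit ((Functor.LeftExtension.mk h φ).coconeAt b) := by
  refine IsColimit.mk (fun s => (H s.pt).2 (natOfCocone g f b s) |>.choose) ?_ ?_
  · intro s x
    have hc := ((H s.pt).2 (natOfCocone g f b s)).choose_spec
    have := congrFun (congrArg (fun θ => θ.app (op x.left)) hc) x.hom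
    simp only [kanMap_app] at this
    exact (Category.assoc _ _ _).trans this
  · intro s m hm
    apply (H s.pt).1
    rw [((H s.pt).2 (natOfCocone g f b s)).choose_spec]
    ext a βa
    revert βa
    change ∀ βa : g.obj a.unop ⟶ b, (kanMap g h f φ b s.pt m).app a βa = (natOfCocone g f b s).app a βa
    intro βa
    refine (kanMap_app g h f φ b s.pt _ a βa).trans ?_
    exact (Category.assoc _ _ _).symm.trans (hm (CostructuredArrow.mk βa))

lemma kanMap_comp_right (b : B) {c c' : C} (β : h.obj b ⟶ c) (m : c ⟶ c') :
    kanMap g h f φ b c' (β ≫ m) = kanMap g h f φ b c β ≫ (homFunctor f).map m := by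
  simp [kanMap]

lemma kanMap_comp_left {b' b : B} (m : b' ⟶ b) {c : C} (β : h.obj b ⟶ c) :
    kanMap g h f φ b' c (h.map m ≫ β) = (homFunctor g).map m ≫ kanMap g h f φ b c β := by
  have := (primeTrans g h f φ).naturality m
  simp only [kanMap, Functor.map_comp, ← Category.assoc]
  rw [this]
  rfl

end Aux

/-- `ψ : s ⟶ h ⋙ t` exhibits `h` as an absolute left lifting of `s` along `t` when for
every category `X` and all functors `x : X ⥤ B`, `k : X ⥤ C`, pasting with the whiskering
of `ψ` by `x` is a bijection from 2-cells `x ⋙ h ⟶ k` to 2-cells `x ⋙ s ⟶ k ⋙ t`. -/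
def ExhibitsAbsoluteLeftLifting.{xu, xv, bu, bv, cu, cv, pu, pv}
    {B : Type bu} {C : Type cu} {P : Type pu}
    [Category.{bv} B] [Category.{cv} C] [Category.{pv} P]
    (s : B ⥤ P) (h : B ⥤ C) (t : C ⥤ P) (ψ : s ⟶ h ⋙ t) : Prop :=
  ∀ (X : Type xu) [Category.{xv} X] (x : X ⥤ B) (k : X ⥤ C),
    Function.Bijective fun δ : x ⋙ h ⟶ k => Functor.whiskerLeft x ψ ≫ Functor.whiskerRight δ t

/-- `φ : f ⟶ g ⋙ h` exhibits `h` as a pointwise left Kan extension of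
`f` along `g` if and only if `φ' : B(g,1) ⟶ h ⋙ C(f,1)` exhibits `h` as an absolute left
lifting of `B(g,1)` along `C(f,1)`. -/
theorem stmt16 {A : Type u₁} {B : Type u₂} {C : Type u₃}
    [Category.{u} A] [Category.{u} B] [Category.{u} C]
    (g : A ⥤ B) (h : B ⥤ C) (f : A ⥤ C) (φ : f ⟶ g ⋙ h) :
    Nonempty (Functor.LeftExtension.mk h φ).IsPointwiseLeftKanExtension ↔
      ExhibitsAbsoluteLeftLifting.{ux, vx}
        (homFunctor g) h (homFunctor f) (primeTrans g h f φ) := by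
  constructor
  · rintro ⟨hpw⟩ X _ x k
    have bij : ∀ (b : B) (c : C), Function.Bijective (kanMap g h f φ b c) :=
      fun b c => bij_of_isColimit g h f φ b (hpw b) c
    constructor
    · intro δ₁ δ₂ e
      refine NatTrans.ext (funext fun p => ?_)
      exact (bij (x.obj p) (k.obj p)).1 (congrArg (fun Θ => Θ.app p) e)
    · intro Θ
      have hspec : ∀ p : X, kanMap g h f φ (x.obj p) (k.obj p)
          (((bij (x.obj p) (k.obj p)).2 (Θ.app p)).choose) = Θ.app p :=
        fun p => ((bij (x.obj p) (k.obj p)).2 (Θ.app p)).choose_spec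
      refine ⟨{ app := fun p => ((bij (x.obj p) (k.obj p)).2 (Θ.app p)).choose
                naturality := ?_ }, ?_⟩
      · intro p q m
        apply (bij (x.obj p) (k.obj q)).1
        simp only [Functor.comp_map]
        rw [kanMap_comp_left, kanMap_comp_right, hspec, hspec]
        exact Θ.naturality m
      · refine NatTrans.ext (funext fun p => ?_)
        exact hspec p
  · intro HL
    refine ⟨fun b => isColimit_of_bij g h f φ b fun c => ?_⟩
    let X := ULiftHom.{vx} (ULift.{ux} (Discrete PUnit.{1}))
    let p₀ : X := ULiftHom.objUp (ULift.up ⟨PUnit.unit⟩)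
    have Hb := HL X ((Functor.const X).obj b) ((Functor.const X).obj c)
    let toδ : (h.obj b ⟶ c) → ((Functor.const X).obj b ⋙ h ⟶ (Functor.const X).obj c) :=
      fun β => { app := fun _ => β, naturality := by intros; simp }
    have key : ∀ β, (Functor.whiskerLeft ((Functor.const X).obj b) (primeTrans g h f φ) ≫
        Functor.whiskerRight (toδ β) (homFunctor f)).app p₀ = kanMap g h f φ b c β := fun β => rfl
    constructor
    · intro β₁ β₂ e
      have : toδ β₁ = toδ β₂ := by
        apply Hb.1
        refine NatTrans.ext (funext fun p => ?_)
        show kanMap g h f φ b c β₁ = kanMap g h f φ b c β₂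
        exact e
      exact congrArg (fun δ => δ.app p₀) this
    · intro θ
      obtain ⟨δ, hδ⟩ := Hb.2
        { app := fun _ => θ
          naturality := by intros; simp }
      exact ⟨δ.app p₀, congrArg (fun Θ => Θ.app p₀) hδ⟩
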